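/- Consider the error dynamics ṡ = −η s + f̃ with η > 0 under the monotonicity assumption (with function α(x, t) and constant D₁ > 0), together with the momentum-plus-elastic algorithm v̂̇ = −γ f̃ α, â̇ = β 𝒩(v̂ − â) + k β 𝒩(ā − â), ā̇ = k β 𝒩(â − ā), with 1/3 ≤ k < 1, 𝒩(t) = 1 + μ‖α(x(t), t)‖², γ, β > 0, and μ > 2 D₁ γ/(β(1 − k)). Then all trajectories (x, â, v̂, ā) remain bounded, f̃ ∈ L² ∩ L∞, s ∈ L² ∩ L∞, (â − v̂) ∈ L², (â − ā) ∈ L², s(t) → 0 as t → ∞, and x(t) → x_d(t). -/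

import Mathlib

open MeasureTheory Filter
open scoped RealInnerProductSpace ENNReal

noncomputable section

/-- The signal `g` is square-integrable (`L²`) on `[0, ∞)`. -/
def InL2 {F : Type*} [NormedAddCommGroup F] (g : ℝ → F) : Prop :=
  ∫⁻ t in Set.Ici (0 : ℝ), ENNReal.ofReal (‖g t‖ ^ 2) < ⊤

/-- The signal `g` is bounded (`L∞`) on `[0, ∞)`. -/
def InLinf {F : Type*} [NormedAddCommGroup F] (g : ℝ → F) : Prop :=
  ∃ C : ℝ, ∀ t : ℝ, 0 ≤ t → ‖g t‖ ≤ C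

set_option maxHeartbeats 0

/-- Young's inequality with parameter. -/
lemma young2 (θ a b : ℝ) (hθ : 0 < θ) : 2*a*b ≤ θ*a^2 + (1/θ)*b^2 := by
  have h2 : θ*(2*a*b) ≤ θ*(θ*a^2 + (1/θ)*b^2) := by
    have he : θ*(θ*a^2 + (1/θ)*b^2) = θ^2*a^2 + b^2 := by
      field_simp
    rw [he]
    nlinarith [sq_nonneg (θ*a - b)]
  exact le_of_mul_le_mul_left h2 hθ

/-- Pointwise scalar estimate for the Lyapunov derivative. -/
lemma key_scalar (η γ β μ k D₁ θ δ₀ lam c sv F nA nw nz iAA iWA iZA : ℝ)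
    (hη : 0 < η) (hγ : 0 < γ) (hβ : 0 < β) (hD₁ : 0 < D₁) (hk0 : 0 < k)
    (hθ0 : 0 < θ) (hθm : 1/θ ≤ β*μ/γ) (hθD : 2*θ ≤ 1/D₁ - δ₀) (hδ₀ : 0 < δ₀)
    (hlam : lam = η*δ₀)
    (hc1 : c ≤ η*lam/2) (hc2 : c ≤ δ₀/2) (hc3 : c ≤ β/γ) (hc4 : c ≤ β*k^2/γ)
    (hnA : 0 ≤ nA) (hnw : 0 ≤ nw) (hnz : 0 ≤ nz)
    (hmono1 : 0 ≤ iAA * F) (hmono2 : (1/D₁) * |F| ≤ |iAA|)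
    (hWA : |iWA| ≤ nw * nA) (hZA : |iZA| ≤ nz * nA) :
    lam * sv * (-η*sv + F) - F*iAA - 2*F*iWA + 2*k*F*iZA
      - (β*(1+μ*nA^2))/γ * (nw^2 + k^2*nz^2)
    ≤ -(c * (sv^2 + F^2 + nw^2 + nz^2)) := by
  -- monotonicity: F * iAA ≥ F²/D₁
  have hFA : (1/D₁) * F^2 ≤ F * iAA := by
    have h1 : F * iAA = |iAA| * |F| := by
      rw [mul_comm F iAA, ← abs_of_nonneg hmono1, abs_mul]
    rw [h1]
    calc (1/D₁) * F^2 = ((1/D₁) * |F|) * |F| := by rw [← sq_abs]; ring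
      _ ≤ |iAA| * |F| := mul_le_mul_of_nonneg_right hmono2 (abs_nonneg F)
  -- Young for the w-cross term
  have h3 : -(2*F*iWA) ≤ θ*F^2 + (1/θ)*(nw*nA)^2 := by
    have ha1 : -(2*F*iWA) ≤ 2 * |F| * |iWA| := by
      have h0 : -(2*F*iWA) ≤ |2*F*iWA| := neg_le_abs _
      have h2 : |2*F*iWA| = 2 * |F| * |iWA| := by
        rw [abs_mul, abs_mul]
        simp
      linarith
    have ha2 : 2 * |F| * |iWA| ≤ 2 * |F| * (nw*nA) :=
      mul_le_mul_of_nonneg_left hWA (by positivity)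
    have ha3 : 2 * |F| * (nw*nA) ≤ θ*F^2 + (1/θ)*(nw*nA)^2 := by
      have := young2 θ (|F|) (nw*nA) hθ0
      rw [sq_abs] at this
      linarith
    linarith
  -- Young for the z-cross term
  have h4 : 2*k*F*iZA ≤ θ*F^2 + (1/θ)*(k*(nz*nA))^2 := by
    have ha1 : 2*k*F*iZA ≤ 2 * |F| * (k*(nz*nA)) := by
      have h0 : 2*k*F*iZA ≤ |2*k*F*iZA| := le_abs_self _
      have h2 : |2*k*F*iZA| = 2*k * |F| * |iZA| := by
        rw [abs_mul, abs_mul, abs_mul]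
        simp [abs_of_nonneg hk0.le]
      have h4' : 2*k * |F| * |iZA| ≤ 2*k * |F| * (nz*nA) :=
        mul_le_mul_of_nonneg_left hZA (by positivity)
      have h5' : 2*k * |F| * (nz*nA) = 2 * |F| * (k*(nz*nA)) := by ring
      linarith
    have ha3 : 2 * |F| * (k*(nz*nA)) ≤ θ*F^2 + (1/θ)*(k*(nz*nA))^2 := by
      have := young2 θ (|F|) (k*(nz*nA)) hθ0
      rw [sq_abs] at this
      linarith
    linarith
  -- expansion of N/γ
  have hNf : (β*(1+μ*nA^2))/γ * (nw^2 + k^2*nz^2)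
      = (β/γ)*nw^2 + (β*k^2/γ)*nz^2
        + (β*μ/γ)*(nA^2*nw^2) + (β*μ/γ)*(nA^2*(k^2*nz^2)) := by
    field_simp
    ring
  -- absorb Young remainders into the N terms
  have h6 : (1/θ)*(nw*nA)^2 ≤ (β*μ/γ)*(nA^2*nw^2) := by
    have he : (nw*nA)^2 = nA^2*nw^2 := by ring
    rw [he]
    exact mul_le_mul_of_nonneg_right hθm (by positivity)
  have h7 : (1/θ)*(k*(nz*nA))^2 ≤ (β*μ/γ)*(nA^2*(k^2*nz^2)) := by
    have he : (k*(nz*nA))^2 = nA^2*(k^2*nz^2) := by ring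
    rw [he]
    exact mul_le_mul_of_nonneg_right hθm (by positivity)
  -- the s-F cross term
  have h1 : lam*sv*(-η*sv + F) ≤ -(η*lam/2)*sv^2 + (δ₀/2)*F^2 := by
    rw [hlam]
    nlinarith [sq_nonneg (η*sv - F), hδ₀.le, hη.le]
  -- F² budget
  have hF2 : θ*F^2 + θ*F^2 - (1/D₁)*F^2 ≤ -δ₀*F^2 := by
    nlinarith [sq_nonneg F]
  -- compare with c
  have hcs : c*sv^2 ≤ (η*lam/2)*sv^2 := mul_le_mul_of_nonneg_right hc1 (sq_nonneg sv)
  have hcf : c*F^2 ≤ (δ₀/2)*F^2 := mul_le_mul_of_nonneg_right hc2 (sq_nonneg F)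
  have hcw : c*nw^2 ≤ (β/γ)*nw^2 := mul_le_mul_of_nonneg_right hc3 (sq_nonneg nw)
  have hcz : c*nz^2 ≤ (β*k^2/γ)*nz^2 := mul_le_mul_of_nonneg_right hc4 (sq_nonneg nz)
  linarith

/-- L² bound from a Lyapunov-type decrease: if `V' ≤ -g` on `[0,∞)`, `V ≥ 0`, `g ≥ 0` bounded
and a.e. measurable, then `∫⁻ g ≤ V 0`. -/
lemma lyap_L2 (V g V' : ℝ → ℝ) (B : ℝ)
    (hV' : ∀ t, 0 ≤ t → HasDerivAt V (V' t) t)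
    (hle : ∀ t, 0 ≤ t → V' t ≤ - g t)
    (hg0 : ∀ t, 0 ≤ t → 0 ≤ g t)
    (hV0 : ∀ t, 0 ≤ t → 0 ≤ V t)
    (hgB : ∀ t, 0 ≤ t → g t ≤ B)
    (hmeas : AEMeasurable g (volume.restrict (Set.Ioi (0:ℝ)))) :
    ∫⁻ t in Set.Ici (0:ℝ), ENNReal.ofReal (g t) ≤ ENNReal.ofReal (V 0) := by
  -- integrability of g on each Ioc 0 n
  have hmeasIoc : ∀ n : ℕ, AEMeasurable g (volume.restrict (Set.Ioc (0:ℝ) n)) := by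
    intro n
    exact hmeas.mono_measure (Measure.restrict_mono Set.Ioc_subset_Ioi_self le_rfl)
  have hint : ∀ n : ℕ, IntegrableOn g (Set.Ioc (0:ℝ) n) := by
    intro n
    refine Integrable.mono' (integrable_const B) (hmeasIoc n).aestronglyMeasurable ?_
    filter_upwards [ae_restrict_mem measurableSet_Ioc] with t ht
    rw [Real.norm_eq_abs, abs_of_nonneg (hg0 t ht.1.le)]
    exact hgB t ht.1.le
  have hintIcc : ∀ n : ℕ, IntegrableOn g (Set.Icc (0:ℝ) n) := by
    intro n
    rw [MeasureTheory.IntegrableOn, Measure.restrict_congr_set Ioc_ae_eq_Icc.symm]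
    exact hint n
  -- FTC inequality on [0, n]
  have key : ∀ n : ℕ, ∫ t in (0:ℝ)..n, g t ≤ V 0 := by
    intro n
    rcases Nat.eq_zero_or_pos n with h0 | hpos
    · simp [h0, hV0 0 le_rfl]
    have hn : (0:ℝ) ≤ n := Nat.cast_nonneg n
    have hcont : ContinuousOn (fun t => -V t) (Set.Icc (0:ℝ) n) := by
      intro t ht
      exact ((hV' t ht.1).continuousAt.neg).continuousWithinAt
    have hderiv : ∀ t ∈ Set.Ioo (0:ℝ) (n:ℝ), HasDerivWithinAt (fun t => -V t) (-V' t) (Set.Ioi t) t :=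
      fun t ht => ((hV' t ht.1.le).neg).hasDerivWithinAt
    have := intervalIntegral.integral_le_sub_of_hasDeriv_right_of_le hn hcont hderiv
      (hintIcc n) (fun t ht => by linarith [hle t ht.1.le])
    have hVn : 0 ≤ V n := hV0 n hn
    linarith [this]
  -- convert to lintegral over Ioc 0 n
  have keyl : ∀ n : ℕ, ∫⁻ t in Set.Ioc (0:ℝ) n, ENNReal.ofReal (g t) ≤ ENNReal.ofReal (V 0) := by
    intro n
    have hn : (0:ℝ) ≤ n := Nat.cast_nonneg n
    have h1 : ENNReal.ofReal (∫ t in Set.Ioc (0:ℝ) n, g t) =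
        ∫⁻ t in Set.Ioc (0:ℝ) n, ENNReal.ofReal (g t) := by
      refine ofReal_integral_eq_lintegral_ofReal (hint n) ?_
      filter_upwards [ae_restrict_mem measurableSet_Ioc] with t ht using hg0 t ht.1.le
    rw [← h1]
    apply ENNReal.ofReal_le_ofReal
    have := key n
    rwa [intervalIntegral.integral_of_le hn] at this
  -- pass to Ici 0 via sup over n
  have hIci : (volume : Measure ℝ).restrict (Set.Ici (0:ℝ)) =
      (volume : Measure ℝ).restrict (Set.Ioi (0:ℝ)) :=
    (Measure.restrict_congr_set Ioi_ae_eq_Ici).symm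
  rw [hIci]
  set μ0 := (volume : Measure ℝ).restrict (Set.Ioi (0:ℝ)) with hμ0
  set F : ℝ → ℝ≥0∞ := fun t => ENNReal.ofReal (g t) with hF
  have hFmeas : AEMeasurable F μ0 := ENNReal.measurable_ofReal.comp_aemeasurable hmeas
  have hFn : ∀ n : ℕ, AEMeasurable ((Set.Ioc (0:ℝ) (n:ℝ)).indicator F) μ0 :=
    fun n => hFmeas.indicator measurableSet_Ioc
  have hmono : ∀ᵐ t ∂μ0, Monotone fun n : ℕ => (Set.Ioc (0:ℝ) (n:ℝ)).indicator F t := by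
    refine ae_of_all _ fun t m m' hmm' => ?_
    exact Set.indicator_le_indicator_of_subset
      (Set.Ioc_subset_Ioc le_rfl (Nat.cast_le.2 hmm')) (fun _ => zero_le) t
  have hsup : ∀ᵐ t ∂μ0, F t = ⨆ n : ℕ, (Set.Ioc (0:ℝ) (n:ℝ)).indicator F t := by
    rw [hμ0]
    filter_upwards [ae_restrict_mem measurableSet_Ioi] with t ht
    refine le_antisymm ?_ (iSup_le fun n => Set.indicator_le_self _ _ t)
    have : t ∈ Set.Ioc (0:ℝ) (⌈t⌉₊ : ℝ) := ⟨ht, Nat.le_ceil t⟩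
    calc F t = (Set.Ioc (0:ℝ) ((⌈t⌉₊:ℕ) : ℝ)).indicator F t := by
              rw [Set.indicator_of_mem this]
      _ ≤ _ := le_iSup (fun n : ℕ => (Set.Ioc (0:ℝ) (n:ℝ)).indicator F t) ⌈t⌉₊
  calc ∫⁻ t, F t ∂μ0 = ∫⁻ t, ⨆ n : ℕ, (Set.Ioc (0:ℝ) (n:ℝ)).indicator F t ∂μ0 :=
        lintegral_congr_ae hsup
    _ = ⨆ n : ℕ, ∫⁻ t, (Set.Ioc (0:ℝ) (n:ℝ)).indicator F t ∂μ0 := lintegral_iSup' hFn hmono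
    _ ≤ ENNReal.ofReal (V 0) := by
        refine iSup_le fun n => ?_
        rw [lintegral_indicator measurableSet_Ioc, hμ0,
          Measure.restrict_restrict measurableSet_Ioc]
        have hss : Set.Ioc (0:ℝ) (n:ℝ) ∩ Set.Ioi (0:ℝ) = Set.Ioc (0:ℝ) (n:ℝ) := by
          ext t
          constructor
          · exact fun h => h.1
          · exact fun h => ⟨h, h.1⟩
        rw [hss]
        exact keyl n


/-- Barbalat-type lemma: a function with bounded derivative on `[0,∞)` whose square is
integrable tends to zero. -/
lemma barbalat (s d : ℝ → ℝ) (L : ℝ)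
    (hs : ∀ t, 0 ≤ t → HasDerivAt s (d t) t)
    (hd : ∀ t, 0 ≤ t → |d t| ≤ L)
    (hL2 : ∫⁻ t in Set.Ici (0:ℝ), ENNReal.ofReal ((s t)^2) < ⊤) :
    Tendsto s atTop (nhds 0) := by
  set L' := max L 1 with hL'
  have hL'1 : (1:ℝ) ≤ L' := le_max_right _ _
  have hL'0 : (0:ℝ) < L' := lt_of_lt_of_le one_pos hL'1
  -- Lipschitz on [0, ∞)
  have hlip : ∀ t₁ ∈ Set.Ici (0:ℝ), ∀ t₂ ∈ Set.Ici (0:ℝ), |s t₂ - s t₁| ≤ L' * |t₂ - t₁| := by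
    intro t₁ h₁ t₂ h₂
    have := (convex_Ici (0:ℝ)).norm_image_sub_le_of_norm_hasDerivWithin_le
      (f := s) (f' := d) (C := L') (fun u hu => (hs u hu).hasDerivWithinAt)
      (fun u hu => le_trans (hd u hu) (le_max_left _ _)) h₁ h₂
    simpa [Real.norm_eq_abs] using this
  rw [Metric.tendsto_atTop]
  by_contra hcon
  push_neg at hcon
  obtain ⟨ε, hε, hfreq⟩ := hcon
  -- for every N there is t ≥ max N 0 with |s t| ≥ ε
  have hfreq' : ∀ N : ℝ, ∃ t, max N 0 ≤ t ∧ ε ≤ |s t| := by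
    intro N
    obtain ⟨t, ht, hst⟩ := hfreq (max N 0)
    refine ⟨t, ht, ?_⟩
    simpa [Real.dist_eq] using hst
  choose T hT₁ hT₂ using hfreq'
  set δ := ε / (2 * L') with hδ
  have hδ0 : 0 < δ := div_pos hε (by positivity)
  -- recursive sequence of points
  set u : ℕ → ℝ := fun n => Nat.rec (T 0) (fun _ prev => T (prev + δ)) n with hu
  have hu0 : ∀ n, 0 ≤ u n := by
    intro n
    cases n with
    | zero => exact le_trans (le_max_right 0 0) (hT₁ 0)
    | succ m => exact le_trans (le_max_right _ 0) (hT₁ _)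
  have husep : ∀ n, u n + δ ≤ u (n+1) := by
    intro n
    exact le_trans (le_max_left _ 0) (hT₁ (u n + δ))
  have hus : ∀ n, ε ≤ |s (u n)| := by
    intro n
    cases n with
    | zero => exact hT₂ 0
    | succ m => exact hT₂ _
  -- on [u n, u n + δ), s² ≥ ε²/4
  have hlow : ∀ n, ∀ t ∈ Set.Ico (u n) (u n + δ), (ε/2)^2 ≤ (s t)^2 := by
    intro n t ht
    have h1 : |s t - s (u n)| ≤ L' * |t - u n| := hlip (u n) (hu0 n) t (le_trans (hu0 n) ht.1)
    have h2 : |t - u n| < δ := by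
      rw [abs_of_nonneg (by linarith [ht.1])]
      linarith [ht.2]
    have h3 : L' * |t - u n| < L' * δ := by
      exact mul_lt_mul_of_pos_left h2 hL'0
    have h4 : L' * δ = ε / 2 := by
      field_simp [hδ]
      rw [hδ]; field_simp
    have h5 : ε / 2 ≤ |s t| := by
      have := hus n
      have habs : |s (u n)| - |s t| ≤ |s t - s (u n)| := by
        have := abs_sub_abs_le_abs_sub (s (u n)) (s t)
        rwa [abs_sub_comm] at this
      linarith [h1, h3, habs]
    calc (ε/2)^2 ≤ |s t|^2 := by
          apply sq_le_sq'
          · linarith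
          · exact h5
      _ = (s t)^2 := sq_abs _
  -- each interval contributes at least E
  set E : ℝ≥0∞ := ENNReal.ofReal ((ε/2)^2) * ENNReal.ofReal δ with hE
  have hcontrib : ∀ n, E ≤ ∫⁻ t in Set.Ico (u n) (u n + δ), ENNReal.ofReal ((s t)^2) := by
    intro n
    have : ∫⁻ t in Set.Ico (u n) (u n + δ), ENNReal.ofReal ((ε/2)^2) ≤
        ∫⁻ t in Set.Ico (u n) (u n + δ), ENNReal.ofReal ((s t)^2) := by
      apply lintegral_mono_ae
      filter_upwards [ae_restrict_mem measurableSet_Ico] with t ht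
      exact ENNReal.ofReal_le_ofReal (hlow n t ht)
    calc E = ENNReal.ofReal ((ε/2)^2) * volume (Set.Ico (u n) (u n + δ)) := by
          rw [hE, Real.volume_Ico]
          congr 1
          congr 1
          ring
      _ = ∫⁻ _ in Set.Ico (u n) (u n + δ), ENNReal.ofReal ((ε/2)^2) := (setLIntegral_const _ _).symm
      _ ≤ _ := this
  -- accumulate
  have haccum : ∀ N : ℕ, (N+1 : ℕ) * E ≤ ∫⁻ t in Set.Ico 0 (u N + δ), ENNReal.ofReal ((s t)^2) := by
    intro N
    induction N with
    | zero =>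
      have h1 : ((0+1 : ℕ) : ℝ≥0∞) * E = E := by norm_num
      rw [h1]
      refine le_trans (hcontrib 0) ?_
      exact lintegral_mono' (Measure.restrict_mono (Set.Ico_subset_Ico_left (hu0 0)) le_rfl) le_rfl
    | succ m ih =>
      have hdisj : Disjoint (Set.Ico (0:ℝ) (u m + δ)) (Set.Ico (u (m+1)) (u (m+1) + δ)) := by
        rw [Set.disjoint_left]
        rintro t ⟨_, ht2⟩ ⟨ht3, _⟩
        linarith [husep m]
      have hsub : Set.Ico (0:ℝ) (u m + δ) ∪ Set.Ico (u (m+1)) (u (m+1) + δ) ⊆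
          Set.Ico (0:ℝ) (u (m+1) + δ) := by
        apply Set.union_subset
        · apply Set.Ico_subset_Ico_right
          linarith [husep m, hδ0.le]
        · exact Set.Ico_subset_Ico_left (hu0 (m+1))
      calc ((m+1+1 : ℕ) : ℝ≥0∞) * E = ((m+1 : ℕ) : ℝ≥0∞) * E + E := by
            push_cast
            ring
        _ ≤ (∫⁻ t in Set.Ico 0 (u m + δ), ENNReal.ofReal ((s t)^2)) +
            ∫⁻ t in Set.Ico (u (m+1)) (u (m+1) + δ), ENNReal.ofReal ((s t)^2) :=
            add_le_add ih (hcontrib (m+1))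
        _ = ∫⁻ t in Set.Ico (0:ℝ) (u m + δ) ∪ Set.Ico (u (m+1)) (u (m+1) + δ),
              ENNReal.ofReal ((s t)^2) := (lintegral_union measurableSet_Ico hdisj).symm
        _ ≤ _ := lintegral_mono' (Measure.restrict_mono hsub le_rfl) le_rfl
  have hfinal : ∀ N : ℕ, (N+1 : ℕ) * E ≤ ∫⁻ t in Set.Ici (0:ℝ), ENNReal.ofReal ((s t)^2) := by
    intro N
    refine le_trans (haccum N) ?_
    refine lintegral_mono' (Measure.restrict_mono ?_ le_rfl) le_rfl
    exact Set.Ico_subset_Icc_self.trans (Set.Icc_subset_Ici_self)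
  -- contradiction
  have hE0 : E ≠ 0 := by
    rw [hE]
    apply mul_ne_zero
    · exact (ENNReal.ofReal_pos.2 (by positivity)).ne'
    · exact (ENNReal.ofReal_pos.2 hδ0).ne'
  have hEtop : E ≠ ⊤ := by
    rw [hE]
    exact ENNReal.mul_ne_top ENNReal.ofReal_ne_top ENNReal.ofReal_ne_top
  set I := ∫⁻ t in Set.Ici (0:ℝ), ENNReal.ofReal ((s t)^2) with hI
  obtain ⟨N, hN⟩ := ENNReal.exists_nat_gt (lt_top_iff_ne_top.1 (ENNReal.div_lt_top hL2.ne hE0))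
  have : ((N:ℕ) : ℝ≥0∞) * E ≤ I := le_trans (le_of_eq (by push_cast; ring_nf)) <|
    le_trans (mul_le_mul_left (by exact_mod_cast Nat.le_succ N) E) (hfinal N)
  have hlt : I < (N : ℝ≥0∞) * E := by
    rw [← ENNReal.div_lt_iff (Or.inl hE0) (Or.inl hEtop)]
    exact hN
  exact absurd this (not_le.2 hlt)


/-- momentum-plus-elastic adaptation law for nonlinearly
parameterized dynamics under the monotonicity assumption. -/
theorem momentum_elastic_adaptation_nonlinear
    {n p : ℕ}
    (x xd : ℝ → EuclideanSpace ℝ (Fin n))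
    (s : ℝ → ℝ)
    (f : EuclideanSpace ℝ (Fin n) → EuclideanSpace ℝ (Fin p) → ℝ → ℝ)
    (α : EuclideanSpace ℝ (Fin n) → ℝ → EuclideanSpace ℝ (Fin p))
    (a : EuclideanSpace ℝ (Fin p))
    (ahat vhat abar : ℝ → EuclideanSpace ℝ (Fin p))
    (η γ β μ k D₁ : ℝ)
    (hη : 0 < η) (hγ : 0 < γ) (hβ : 0 < β) (hD₁ : 0 < D₁)
    (hk₁ : 1 / 3 ≤ k) (hk₂ : k < 1)
    (hμ : 2 * D₁ * γ / (β * (1 - k)) < μ)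
    -- monotonicity assumption
    (hmono₁ : ∀ (b : EuclideanSpace ℝ (Fin p)) (ξ : EuclideanSpace ℝ (Fin n)) (t : ℝ),
      0 ≤ t → 0 ≤ ⟪b - a, α ξ t⟫ * (f ξ b t - f ξ a t))
    (hmono₂ : ∀ (b : EuclideanSpace ℝ (Fin p)) (ξ : EuclideanSpace ℝ (Fin n)) (t : ℝ),
      0 ≤ t → (1 / D₁) * |f ξ b t - f ξ a t| ≤ |⟪α ξ t, b - a⟫|)
    -- error dynamics ṡ = -η s + f̃
    (hs : ∀ t, 0 ≤ t →
      HasDerivAt s (-η * s t + (f (x t) (ahat t) t - f (x t) a t)) t)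
    -- momentum-plus-elastic adaptation law, 𝒩(t) = 1 + μ‖α(x(t), t)‖²
    (hv : ∀ t, 0 ≤ t →
      HasDerivAt vhat
        (-((γ * (f (x t) (ahat t) t - f (x t) a t)) • α (x t) t)) t)
    (ha : ∀ t, 0 ≤ t →
      HasDerivAt ahat
        ((β * (1 + μ * ‖α (x t) t‖ ^ 2)) • (vhat t - ahat t) +
          (k * (β * (1 + μ * ‖α (x t) t‖ ^ 2))) • (abar t - ahat t)) t)
    (hb : ∀ t, 0 ≤ t →
      HasDerivAt abar
        ((k * (β * (1 + μ * ‖α (x t) t‖ ^ 2))) • (ahat t - abar t)) t)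
    -- f̃ is locally bounded in (x, â) uniformly in t
    (hfloc : ∀ R : ℝ, ∃ M : ℝ,
      ∀ (ξ : EuclideanSpace ℝ (Fin n)) (b : EuclideanSpace ℝ (Fin p)) (t : ℝ),
        0 ≤ t → ‖ξ‖ ≤ R → ‖b‖ ≤ R → |f ξ b t - f ξ a t| ≤ M)
    -- boundedness of s implies boundedness of x
    (hsx : InLinf s → InLinf x)
    -- s → 0 implies x → x_d
    (hxd : Tendsto s atTop (nhds 0) →
      Tendsto (fun t => x t - xd t) atTop (nhds 0)) :
    InLinf x ∧ InLinf ahat ∧ InLinf vhat ∧ InLinf abar ∧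
    (InL2 (fun t => f (x t) (ahat t) t - f (x t) a t) ∧
      InLinf (fun t => f (x t) (ahat t) t - f (x t) a t)) ∧
    (InL2 s ∧ InLinf s) ∧
    InL2 (fun t => ahat t - vhat t) ∧
    InL2 (fun t => ahat t - abar t) ∧
    Tendsto s atTop (nhds 0) ∧
    Tendsto (fun t => x t - xd t) atTop (nhds 0) := by
  -- abbreviations
  set ft : ℝ → ℝ := fun t => f (x t) (ahat t) t - f (x t) a t with hft
  set Af : ℝ → EuclideanSpace ℝ (Fin p) := fun t => α (x t) t with hAf
  set Nf : ℝ → ℝ := fun t => β * (1 + μ * ‖Af t‖ ^ 2) with hNfd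
  set uu : ℝ → EuclideanSpace ℝ (Fin p) := fun t => vhat t - ahat t with huu
  set zz : ℝ → EuclideanSpace ℝ (Fin p) := fun t => abar t - ahat t with hzz
  set ww : ℝ → EuclideanSpace ℝ (Fin p) := fun t => uu t + k • zz t with hww
  -- basic constants
  have hk0 : (0:ℝ) < k := lt_of_lt_of_le (by norm_num) hk₁
  have h1k : (0:ℝ) < 1 - k := by linarith
  have hμ0 : 0 < μ := by
    have h0 : 0 < 2 * D₁ * γ / (β * (1 - k)) := by positivity
    linarith
  have hbμ : 0 < β * μ := mul_pos hβ hμ0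
  have hm2D : 2 * D₁ < β * μ / γ := by
    rw [div_lt_iff₀ (by positivity)] at hμ
    rw [lt_div_iff₀ hγ]
    nlinarith [mul_nonneg (mul_pos hβ hμ0).le hk0.le]
  set θ : ℝ := (γ/(β*μ) + 1/(2*D₁))/2 with hθdef
  set δ₀ : ℝ := 1/(2*D₁) - γ/(β*μ) with hδ₀def
  have hθ0 : 0 < θ := by rw [hθdef]; positivity
  have hδ₀ : 0 < δ₀ := by
    rw [hδ₀def, sub_pos, div_lt_div_iff₀ hbμ (by positivity)]
    nlinarith [(lt_div_iff₀ hγ).1 hm2D]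
  have hθm : 1/θ ≤ β*μ/γ := by
    have h1 : γ/(β*μ) ≤ θ := by
      rw [hθdef]
      have : γ/(β*μ) ≤ 1/(2*D₁) := by
        rw [hδ₀def] at hδ₀
        linarith
      linarith
    have h2 : (0:ℝ) < γ/(β*μ) := by positivity
    calc 1/θ ≤ 1/(γ/(β*μ)) := one_div_le_one_div_of_le h2 h1
      _ = β*μ/γ := by rw [one_div_div]
  have hθD : 2*θ ≤ 1/D₁ - δ₀ := by
    rw [hθdef, hδ₀def]
    have h : 2*((γ/(β*μ) + 1/(2*D₁))/2) = 1/D₁ - (1/(2*D₁) - γ/(β*μ)) := by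
      field_simp
      ring
    linarith [h.le]
  set lam : ℝ := η * δ₀ with hlamdef
  have hlam0 : 0 < lam := mul_pos hη hδ₀
  set c : ℝ := min (min (η*lam/2) (δ₀/2)) (min (β/γ) (β*k^2/γ)) with hcdef
  have hc0 : 0 < c := by
    rw [hcdef]
    apply lt_min (lt_min (by positivity) (by positivity)) (lt_min (by positivity) (by positivity))
  have hc1 : c ≤ η*lam/2 := le_trans (min_le_left _ _) (min_le_left _ _)
  have hc2 : c ≤ δ₀/2 := le_trans (min_le_left _ _) (min_le_right _ _)
  have hc3 : c ≤ β/γ := le_trans (min_le_right _ _) (min_le_left _ _)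
  have hc4 : c ≤ β*k^2/γ := le_trans (min_le_right _ _) (min_le_right _ _)
  clear_value θ δ₀ lam c
  -- primed dynamics
  have hs' : ∀ t, 0 ≤ t → HasDerivAt s (-η * s t + ft t) t := fun t ht => hs t ht
  -- derivatives of the auxiliary signals
  set vtd : ℝ → EuclideanSpace ℝ (Fin p) := fun t => -((γ * ft t) • Af t) with hvtd
  set uud : ℝ → EuclideanSpace ℝ (Fin p) :=
    fun t => vtd t - (Nf t • uu t + (k * Nf t) • zz t) with huud
  set zzd : ℝ → EuclideanSpace ℝ (Fin p) :=
    fun t => (k * Nf t) • (ahat t - abar t) - (Nf t • uu t + (k * Nf t) • zz t) with hzzd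
  -- the Lyapunov function
  set V : ℝ → ℝ := fun t => lam/2 * (s t * s t)
      + (1/(2*γ)) * ⟪vhat t - a, vhat t - a⟫
      + (1/(2*γ)) * ⟪uu t, uu t⟫
      + (k/(2*γ)) * ⟪zz t, zz t⟫ with hVdef
  set Vd : ℝ → ℝ := fun t => lam/2 * ((-η * s t + ft t) * s t + s t * (-η * s t + ft t))
      + (1/(2*γ)) * (⟪vhat t - a, vtd t⟫ + ⟪vtd t, vhat t - a⟫)
      + (1/(2*γ)) * (⟪uu t, uud t⟫ + ⟪uud t, uu t⟫)
      + (k/(2*γ)) * (⟪zz t, zzd t⟫ + ⟪zzd t, zz t⟫) with hVddef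
  set G : ℝ → ℝ := fun t => s t^2 + ft t^2 + ‖ww t‖^2 + ‖zz t‖^2 with hGdef
  have hG0 : ∀ t, 0 ≤ G t := by
    intro t
    simp only [hGdef]
    positivity
  -- V has derivative Vd on [0,∞)
  have hVd : ∀ t, 0 ≤ t → HasDerivAt V (Vd t) t := by
    intro t ht
    have h1 := (hs' t ht).mul (hs' t ht)
    have h2 := ((hv t ht).sub_const a).inner (𝕜 := ℝ) ((hv t ht).sub_const a)
    have h3 := ((hv t ht).sub (ha t ht)).inner (𝕜 := ℝ) ((hv t ht).sub (ha t ht))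
    have h4 := ((hb t ht).sub (ha t ht)).inner (𝕜 := ℝ) ((hb t ht).sub (ha t ht))
    exact (((h1.const_mul (lam/2)).add (h2.const_mul (1/(2*γ)))).add
      (h3.const_mul (1/(2*γ)))).add (h4.const_mul (k/(2*γ)))
  clear_value V Vd G
  -- pointwise key inequality
  have hkey : ∀ t, 0 ≤ t → Vd t ≤ -(c * G t) := by
    intro t ht
    have hvt_dec : vhat t - a = (ahat t - a) + uu t := by
      simp only [huu]
      abel
    have hzneg : ahat t - abar t = -(zz t) := by
      simp only [hzz]
      abel
    have huw : uu t = ww t - k • zz t := by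
      rw [hww]
      exact (add_sub_cancel_right _ _).symm
    have e2 : ⟪vhat t - a, vtd t⟫
        = -(γ * ft t) * (⟪ahat t - a, Af t⟫ + ⟪uu t, Af t⟫) := by
      rw [hvt_dec]
      simp only [hvtd, inner_neg_right, real_inner_smul_right, inner_add_left]
      ring
    have e2' : ⟪vtd t, vhat t - a⟫ = ⟪vhat t - a, vtd t⟫ := real_inner_comm _ _
    have e3 : ⟪uu t, uud t⟫ = -(γ * ft t) * ⟪uu t, Af t⟫
        - (Nf t * ⟪uu t, uu t⟫ + k * Nf t * ⟪uu t, zz t⟫) := by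
      simp only [huud, hvtd, inner_sub_right, inner_add_right, inner_neg_right,
        real_inner_smul_right]
      ring
    have e3' : ⟪uud t, uu t⟫ = ⟪uu t, uud t⟫ := real_inner_comm _ _
    have e4 : ⟪zz t, zzd t⟫ = -(k * Nf t * ⟪zz t, zz t⟫)
        - (Nf t * ⟪uu t, zz t⟫ + k * Nf t * ⟪zz t, zz t⟫) := by
      simp only [hzzd, hzneg, inner_sub_right, inner_add_right, inner_neg_right,
        real_inner_smul_right, real_inner_comm (zz t) (uu t)]
      ring
    have e4' : ⟪zzd t, zz t⟫ = ⟪zz t, zzd t⟫ := real_inner_comm _ _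
    have eW : ⟪ww t, ww t⟫ = ⟪uu t, uu t⟫ + 2*(k*⟪uu t, zz t⟫) + k^2*⟪zz t, zz t⟫ := by
      simp only [hww, inner_add_left, inner_add_right, real_inner_smul_left,
        real_inner_smul_right, real_inner_comm (zz t) (uu t)]
      ring
    have eUU : ⟪uu t, uu t⟫ = ⟪ww t, ww t⟫ - 2*(k*⟪uu t, zz t⟫) - k^2*⟪zz t, zz t⟫ := by
      linarith [eW]
    have eUA : ⟪uu t, Af t⟫ = ⟪ww t, Af t⟫ - k * ⟪zz t, Af t⟫ := by
      rw [huw]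
      simp only [inner_sub_left, real_inner_smul_left]
    have nW : ⟪ww t, ww t⟫ = ‖ww t‖^2 := real_inner_self_eq_norm_sq _
    have nZ : ⟪zz t, zz t⟫ = ‖zz t‖^2 := real_inner_self_eq_norm_sq _
    have hVdeq : Vd t = lam * s t * (-η * s t + ft t)
        - ft t * ⟪ahat t - a, Af t⟫ - 2 * ft t * ⟪ww t, Af t⟫ + 2*k*ft t*⟪zz t, Af t⟫
        - (β*(1+μ*‖Af t‖^2))/γ * (‖ww t‖^2 + k^2*‖zz t‖^2) := by
      simp only [hVddef]
      rw [e2', e2, e3', e3, e4', e4, eUU, eUA, nW, nZ]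
      simp only [hNfd]
      field_simp
      ring
    have KS := key_scalar η γ β μ k D₁ θ δ₀ lam c (s t) (ft t) ‖Af t‖ ‖ww t‖ ‖zz t‖
      ⟪ahat t - a, Af t⟫ ⟪ww t, Af t⟫ ⟪zz t, Af t⟫
      hη hγ hβ hD₁ hk0 hθ0 hθm hθD hδ₀ hlamdef hc1 hc2 hc3 hc4
      (norm_nonneg _) (norm_nonneg _) (norm_nonneg _)
      (hmono₁ (ahat t) (x t) t ht)
      (by
        have h := hmono₂ (ahat t) (x t) t ht
        rwa [real_inner_comm] at h)
      (abs_real_inner_le_norm _ _) (abs_real_inner_le_norm _ _)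
    rw [hVdeq, hGdef]
    exact KS
  -- V is nonincreasing on [0,∞)
  have hVnn : ∀ t, 0 ≤ V t := by
    intro t
    simp only [hVdef]
    have h1 : 0 ≤ s t * s t := mul_self_nonneg _
    have h2 : (0:ℝ) ≤ ⟪vhat t - a, vhat t - a⟫ := real_inner_self_nonneg
    have h3 : (0:ℝ) ≤ ⟪uu t, uu t⟫ := real_inner_self_nonneg
    have h4 : (0:ℝ) ≤ ⟪zz t, zz t⟫ := real_inner_self_nonneg
    have c1 : (0:ℝ) ≤ lam/2 := by positivity
    have c2 : (0:ℝ) ≤ 1/(2*γ) := by positivity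
    have c3 : (0:ℝ) ≤ k/(2*γ) := by positivity
    have := mul_nonneg c1 h1
    have := mul_nonneg c2 h2
    have := mul_nonneg c2 h3
    have := mul_nonneg c3 h4
    linarith
  have hanti : AntitoneOn V (Set.Ici 0) := by
    apply antitoneOn_of_deriv_nonpos (convex_Ici 0)
    · exact fun t ht => ((hVd t ht).continuousAt).continuousWithinAt
    · intro t ht
      rw [interior_Ici] at ht
      exact ((hVd t ht.le).differentiableAt).differentiableWithinAt
    · intro t ht
      rw [interior_Ici] at ht
      rw [(hVd t ht.le).deriv]
      have h1 := hkey t ht.le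
      have h2 : 0 ≤ c * G t := mul_nonneg hc0.le (hG0 t)
      linarith
  have hVle : ∀ t, 0 ≤ t → V t ≤ V 0 := fun t ht => hanti Set.self_mem_Ici ht ht
  -- component bounds
  have hparts : ∀ t, 0 ≤ t →
      lam/2 * (s t * s t) ≤ V 0 ∧ (1/(2*γ)) * ⟪vhat t - a, vhat t - a⟫ ≤ V 0 ∧
      (1/(2*γ)) * ⟪uu t, uu t⟫ ≤ V 0 ∧ (k/(2*γ)) * ⟪zz t, zz t⟫ ≤ V 0 := by
    intro t ht
    have hV := hVle t ht
    have hexp : V t = lam/2 * (s t * s t) + (1/(2*γ)) * ⟪vhat t - a, vhat t - a⟫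
        + (1/(2*γ)) * ⟪uu t, uu t⟫ + (k/(2*γ)) * ⟪zz t, zz t⟫ := by
      simp only [hVdef]
    have h1 : 0 ≤ lam/2 * (s t * s t) := mul_nonneg (by positivity) (mul_self_nonneg _)
    have h2 : (0:ℝ) ≤ (1/(2*γ)) * ⟪vhat t - a, vhat t - a⟫ :=
      mul_nonneg (by positivity) real_inner_self_nonneg
    have h3 : (0:ℝ) ≤ (1/(2*γ)) * ⟪uu t, uu t⟫ :=
      mul_nonneg (by positivity) real_inner_self_nonneg
    have h4 : (0:ℝ) ≤ (k/(2*γ)) * ⟪zz t, zz t⟫ :=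
      mul_nonneg (by positivity) real_inner_self_nonneg
    exact ⟨by linarith, by linarith, by linarith, by linarith⟩
  -- explicit sup bounds
  set Cs : ℝ := Real.sqrt (V 0 / (lam/2)) with hCs
  set Cv : ℝ := Real.sqrt (V 0 / (1/(2*γ))) with hCv
  set Cz : ℝ := Real.sqrt (V 0 / (k/(2*γ))) with hCz
  have sqb : ∀ (r B aa : ℝ), 0 < aa → aa * r ≤ B → 0 ≤ r → r ≤ B / aa := by
    intro r B aa haa h hr
    rw [le_div_iff₀ haa]
    linarith
  have hsb : ∀ t, 0 ≤ t → |s t| ≤ Cs := by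
    intro t ht
    have h := (hparts t ht).1
    have h2 : s t * s t ≤ V 0 / (lam/2) :=
      sqb _ _ _ (by positivity) h (mul_self_nonneg _)
    rw [hCs]
    calc |s t| = Real.sqrt ((s t)^2) := (Real.sqrt_sq_eq_abs _).symm
      _ ≤ _ := Real.sqrt_le_sqrt (by nlinarith)
  have hvb : ∀ t, 0 ≤ t → ‖vhat t - a‖ ≤ Cv := by
    intro t ht
    have h := (hparts t ht).2.1
    have h2 : ⟪vhat t - a, vhat t - a⟫ ≤ V 0 / (1/(2*γ)) :=
      sqb _ _ _ (by positivity) h real_inner_self_nonneg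
    rw [real_inner_self_eq_norm_sq] at h2
    rw [hCv]
    calc ‖vhat t - a‖ = Real.sqrt (‖vhat t - a‖^2) := by
          rw [Real.sqrt_sq (norm_nonneg _)]
      _ ≤ _ := Real.sqrt_le_sqrt h2
  have hub : ∀ t, 0 ≤ t → ‖uu t‖ ≤ Cv := by
    intro t ht
    have h := (hparts t ht).2.2.1
    have h2 : ⟪uu t, uu t⟫ ≤ V 0 / (1/(2*γ)) :=
      sqb _ _ _ (by positivity) h real_inner_self_nonneg
    rw [real_inner_self_eq_norm_sq] at h2
    rw [hCv]
    calc ‖uu t‖ = Real.sqrt (‖uu t‖^2) := by rw [Real.sqrt_sq (norm_nonneg _)]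
      _ ≤ _ := Real.sqrt_le_sqrt h2
  have hzb : ∀ t, 0 ≤ t → ‖zz t‖ ≤ Cz := by
    intro t ht
    have h := (hparts t ht).2.2.2
    have h2 : ⟪zz t, zz t⟫ ≤ V 0 / (k/(2*γ)) :=
      sqb _ _ _ (by positivity) h real_inner_self_nonneg
    rw [real_inner_self_eq_norm_sq] at h2
    rw [hCz]
    calc ‖zz t‖ = Real.sqrt (‖zz t‖^2) := by rw [Real.sqrt_sq (norm_nonneg _)]
      _ ≤ _ := Real.sqrt_le_sqrt h2
  clear_value Cs Cv Cz
  -- L∞ statements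
  have Ls : InLinf s := ⟨Cs, fun t ht => by rw [Real.norm_eq_abs]; exact hsb t ht⟩
  have Lx : InLinf x := hsx Ls
  have Lvhat : InLinf vhat := by
    refine ⟨‖a‖ + Cv, fun t ht => ?_⟩
    have : vhat t = a + (vhat t - a) := by abel
    rw [this]
    calc ‖a + (vhat t - a)‖ ≤ ‖a‖ + ‖vhat t - a‖ := norm_add_le _ _
      _ ≤ ‖a‖ + Cv := by linarith [hvb t ht]
  have hahatb : ∀ t, 0 ≤ t → ‖ahat t‖ ≤ ‖a‖ + Cv + Cv := by
    intro t ht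
    have heq : ahat t = a + ((vhat t - a) - uu t) := by
      simp only [huu]
      abel
    rw [heq]
    calc ‖a + ((vhat t - a) - uu t)‖ ≤ ‖a‖ + ‖(vhat t - a) - uu t‖ := norm_add_le _ _
      _ ≤ ‖a‖ + (‖vhat t - a‖ + ‖uu t‖) := by
          linarith [norm_sub_le (vhat t - a) (uu t)]
      _ ≤ ‖a‖ + Cv + Cv := by linarith [hvb t ht, hub t ht]
  have Lahat : InLinf ahat := ⟨‖a‖ + Cv + Cv, hahatb⟩
  have Labar : InLinf abar := by
    refine ⟨‖a‖ + Cv + Cv + Cz, fun t ht => ?_⟩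
    have heq : abar t = zz t + ahat t := by
      simp only [hzz]
      abel
    rw [heq]
    calc ‖zz t + ahat t‖ ≤ ‖zz t‖ + ‖ahat t‖ := norm_add_le _ _
      _ ≤ ‖a‖ + Cv + Cv + Cz := by linarith [hzb t ht, hahatb t ht]
  -- ft is bounded
  obtain ⟨Cx, hCx⟩ := id Lx
  obtain ⟨M, hM⟩ := hfloc (max Cx (‖a‖ + Cv + Cv))
  have hftb : ∀ t, 0 ≤ t → |ft t| ≤ M := by
    intro t ht
    exact hM (x t) (ahat t) t ht (le_trans (hCx t ht) (le_max_left _ _))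
      (le_trans (hahatb t ht) (le_max_right _ _))
  have Lft : InLinf ft := ⟨M, fun t ht => by rw [Real.norm_eq_abs]; exact hftb t ht⟩
  -- w bound
  have hwb : ∀ t, 0 ≤ t → ‖ww t‖ ≤ Cv + Cz := by
    intro t ht
    simp only [hww]
    calc ‖uu t + k • zz t‖ ≤ ‖uu t‖ + ‖k • zz t‖ := norm_add_le _ _
      _ = ‖uu t‖ + |k| * ‖zz t‖ := by rw [norm_smul, Real.norm_eq_abs]
      _ ≤ Cv + Cz := by
          rw [abs_of_pos hk0]
          nlinarith [hub t ht, hzb t ht, norm_nonneg (zz t), hk0.le, hk₂.le]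
  -- G bound
  set B : ℝ := Cs^2 + M^2 + (Cv+Cz)^2 + Cz^2 with hB
  have hGB : ∀ t, 0 ≤ t → G t ≤ B := by
    intro t ht
    simp only [hGdef, hB]
    have h1 : s t^2 ≤ Cs^2 := by nlinarith [hsb t ht, abs_nonneg (s t), sq_abs (s t)]
    have h2 : ft t^2 ≤ M^2 := by nlinarith [hftb t ht, abs_nonneg (ft t), sq_abs (ft t)]
    have h3 : ‖ww t‖^2 ≤ (Cv+Cz)^2 := by nlinarith [hwb t ht, norm_nonneg (ww t)]
    have h4 : ‖zz t‖^2 ≤ Cz^2 := by nlinarith [hzb t ht, norm_nonneg (zz t)]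
    linarith
  clear_value B
  -- measurability of G
  have hscont : ContinuousOn s (Set.Ioi (0:ℝ)) :=
    fun τ hτ => ((hs' τ (le_of_lt hτ)).continuousAt).continuousWithinAt
  have hvcont : ContinuousOn vhat (Set.Ioi (0:ℝ)) :=
    fun τ hτ => ((hv τ (le_of_lt hτ)).continuousAt).continuousWithinAt
  have hacont : ContinuousOn ahat (Set.Ioi (0:ℝ)) :=
    fun τ hτ => ((ha τ (le_of_lt hτ)).continuousAt).continuousWithinAt
  have hbcont : ContinuousOn abar (Set.Ioi (0:ℝ)) :=
    fun τ hτ => ((hb τ (le_of_lt hτ)).continuousAt).continuousWithinAt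
  have hsm : AEMeasurable s (volume.restrict (Set.Ioi (0:ℝ))) :=
    hscont.aemeasurable measurableSet_Ioi
  have hum : AEMeasurable uu (volume.restrict (Set.Ioi (0:ℝ))) :=
    ((hvcont.sub hacont).aemeasurable measurableSet_Ioi)
  have hzm : AEMeasurable zz (volume.restrict (Set.Ioi (0:ℝ))) :=
    ((hbcont.sub hacont).aemeasurable measurableSet_Ioi)
  have hwm : AEMeasurable ww (volume.restrict (Set.Ioi (0:ℝ))) := by
    have : ContinuousOn ww (Set.Ioi (0:ℝ)) := by
      rw [hww]
      exact (hvcont.sub hacont).add ((hbcont.sub hacont).const_smul k)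
    exact this.aemeasurable measurableSet_Ioi
  have hftm : AEMeasurable ft (volume.restrict (Set.Ioi (0:ℝ))) := by
    have hder : AEMeasurable (fun τ => deriv s τ + η * s τ) (volume.restrict (Set.Ioi (0:ℝ))) :=
      (measurable_deriv s).aemeasurable.add (hsm.const_mul η)
    refine hder.congr ?_
    rw [Filter.EventuallyEq, ae_restrict_iff' measurableSet_Ioi]
    refine ae_of_all _ fun τ hτ => ?_
    have hd := (hs' τ (le_of_lt hτ)).deriv
    rw [hd]
    ring
  have hGm : AEMeasurable G (volume.restrict (Set.Ioi (0:ℝ))) := by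
    rw [hGdef]
    exact (((hsm.pow_const 2).add (hftm.pow_const 2)).add
      ((hwm.norm.pow_const 2))).add (hzm.norm.pow_const 2)
  -- apply the Lyapunov L² lemma to V/c
  have hmain : ∫⁻ t in Set.Ici (0:ℝ), ENNReal.ofReal (G t) ≤ ENNReal.ofReal (V 0 / c) := by
    have h := lyap_L2 (fun τ => V τ / c) G (fun τ => Vd τ / c) B
      (fun t ht => (hVd t ht).div_const c)
      (fun t ht => by
        show Vd t / c ≤ -G t
        rw [div_le_iff₀ hc0]
        have := hkey t ht
        linarith)
      (fun t _ => hG0 t)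
      (fun t _ => div_nonneg (hVnn t) hc0.le)
      hGB hGm
    exact h
  have hGfin : ∫⁻ t in Set.Ici (0:ℝ), ENNReal.ofReal (G t) < ⊤ :=
    lt_of_le_of_lt hmain ENNReal.ofReal_lt_top
  have hGexp : ∀ t, G t = s t^2 + ft t^2 + ‖ww t‖^2 + ‖zz t‖^2 := by
    intro t
    simp only [hGdef]
  -- L² of s (squared form)
  have hsL2' : ∫⁻ t in Set.Ici (0:ℝ), ENNReal.ofReal ((s t)^2) < ⊤ := by
    refine lt_of_le_of_lt (lintegral_mono fun t => ENNReal.ofReal_le_ofReal ?_) hGfin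
    rw [hGexp t]
    linarith [sq_nonneg (ft t), sq_nonneg ‖ww t‖, sq_nonneg ‖zz t‖]
  have L2s : InL2 s := by
    rw [InL2]
    refine lt_of_le_of_lt (lintegral_mono fun t => ENNReal.ofReal_le_ofReal ?_) hGfin
    rw [hGexp t, Real.norm_eq_abs, sq_abs]
    linarith [sq_nonneg (ft t), sq_nonneg ‖ww t‖, sq_nonneg ‖zz t‖]
  have L2ft : InL2 ft := by
    rw [InL2]
    refine lt_of_le_of_lt (lintegral_mono fun t => ENNReal.ofReal_le_ofReal ?_) hGfin
    rw [hGexp t, Real.norm_eq_abs, sq_abs]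
    linarith [sq_nonneg (s t), sq_nonneg ‖ww t‖, sq_nonneg ‖zz t‖]
  have L2z : InL2 (fun t => ahat t - abar t) := by
    rw [InL2]
    refine lt_of_le_of_lt (lintegral_mono fun t => ENNReal.ofReal_le_ofReal ?_) hGfin
    rw [hGexp t]
    have hnz : ‖ahat t - abar t‖ = ‖zz t‖ := by
      simp only [hzz]
      exact norm_sub_rev _ _
    rw [hnz]
    linarith [sq_nonneg (s t), sq_nonneg (ft t), sq_nonneg ‖ww t‖]
  -- L² of ahat - vhat
  have L2u : InL2 (fun t => ahat t - vhat t) := by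
    rw [InL2]
    have hbound : ∀ t : ℝ, ENNReal.ofReal (‖ahat t - vhat t‖^2) ≤ 2 * ENNReal.ofReal (G t) := by
      intro t
      have hnu : ‖ahat t - vhat t‖ = ‖uu t‖ := by
        simp only [huu]
        exact norm_sub_rev _ _
      have h1 : ‖uu t‖ ≤ ‖ww t‖ + ‖zz t‖ := by
        have huw : uu t = ww t - k • zz t := by
          rw [hww]
          exact (add_sub_cancel_right _ _).symm
        rw [huw]
        calc ‖ww t - k • zz t‖ ≤ ‖ww t‖ + ‖k • zz t‖ := norm_sub_le _ _
          _ = ‖ww t‖ + |k| * ‖zz t‖ := by rw [norm_smul, Real.norm_eq_abs]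
          _ ≤ ‖ww t‖ + ‖zz t‖ := by
              nlinarith [norm_nonneg (zz t), abs_of_pos hk0, hk₂.le, hk0.le]
      have h2 : ‖ahat t - vhat t‖^2 ≤ 2 * G t := by
        rw [hnu, hGexp t]
        nlinarith [sq_nonneg (‖ww t‖ - ‖zz t‖), norm_nonneg (uu t), norm_nonneg (ww t),
          norm_nonneg (zz t), sq_nonneg (s t), sq_nonneg (ft t)]
      calc ENNReal.ofReal (‖ahat t - vhat t‖^2) ≤ ENNReal.ofReal (2 * G t) :=
            ENNReal.ofReal_le_ofReal h2
        _ = ENNReal.ofReal 2 * ENNReal.ofReal (G t) := ENNReal.ofReal_mul (by norm_num)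
        _ = 2 * ENNReal.ofReal (G t) := by norm_num
    refine lt_of_le_of_lt (lintegral_mono hbound) ?_
    have hmeq : (volume : Measure ℝ).restrict (Set.Ici (0:ℝ))
        = (volume : Measure ℝ).restrict (Set.Ioi (0:ℝ)) :=
      (Measure.restrict_congr_set Ioi_ae_eq_Ici).symm
    rw [hmeq] at hGfin ⊢
    rw [lintegral_const_mul'' 2 hGm.ennreal_ofReal]
    exact ENNReal.mul_lt_top (by norm_num) hGfin
  -- Barbalat: s → 0
  have htend : Tendsto s atTop (nhds 0) := by
    refine barbalat s (fun t => -η * s t + ft t) (η * Cs + M) hs' ?_ hsL2'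
    intro t ht
    have h1 : |(-η) * s t + ft t| ≤ |(-η) * s t| + |ft t| := abs_add_le _ _
    have h2 : |(-η) * s t| = η * |s t| := by
      rw [abs_mul, abs_neg, abs_of_pos hη]
    have h3 := hsb t ht
    have h4 := hftb t ht
    have h5 : η * |s t| ≤ η * Cs := mul_le_mul_of_nonneg_left h3 hη.le
    calc |(-η) * s t + ft t| ≤ η * |s t| + |ft t| := by rw [← h2]; exact h1
      _ ≤ η * Cs + M := by linarith
  exact ⟨Lx, Lahat, Lvhat, Labar, ⟨L2ft, Lft⟩, ⟨L2s, Ls⟩, L2u, L2z, htend, hxd htend⟩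
end
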